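/- Let W ⊆ ℝ^m be convex, μ : ℝ^m → ℝ differentiable convex, η : ℝ^m → ℝ convex. Fix w ∈ W and let v ∈ W minimize the function u ↦ ⟨∇μ(w), u⟩ + η(u) over W. If v ≠ w and φ(w) := ⟨∇μ(w), w − v⟩ + η(w) − η(v) > 0, then the direction p = v − w is a descent direction for f = μ + η at w in the sense that the directional derivative satisfies f'(w; p) ≤ −φ(w) < 0. -/

import Mathlib

open RealInnerProductSpace

theorem PL_descent_direction
    {m : ℕ} (W : Set (EuclideanSpace ℝ (Fin m))) (hWconv : Convex ℝ W)
    (μ η : EuclideanSpace ℝ (Fin m) → ℝ)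
    (μ' : EuclideanSpace ℝ (Fin m) → EuclideanSpace ℝ (Fin m))
    (hμ : ∀ x, HasGradientAt μ (μ' x) x)
    (hμconv : ConvexOn ℝ Set.univ μ)
    (hηconv : ConvexOn ℝ Set.univ η)
    (w v : EuclideanSpace ℝ (Fin m)) (hw : w ∈ W) (hv : v ∈ W)
    (hvmin : IsMinOn (fun u => (inner ℝ (μ' w) u : ℝ) + η u) W v)
    (hne : v ≠ w)
    (φw : ℝ) (hφw : φw = (inner ℝ (μ' w) (w - v) : ℝ) + η w - η v) (hφpos : φw > 0)
    (fd : ℝ)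
    (hfd : Filter.Tendsto
      (fun t : ℝ => ((μ (w + t • (v - w)) + η (w + t • (v - w))) - (μ w + η w)) / t)
      (nhdsWithin 0 (Set.Ioi 0)) (nhds fd)) :
    fd ≤ -φw ∧ -φw < 0 := by
  constructor
  · set p := v - w with hp
    -- derivative of t ↦ μ (w + t • p) at 0
    have hline : HasDerivAt (fun t : ℝ => w + t • p) p 0 := by
      simpa using ((hasDerivAt_id (0:ℝ)).smul_const p).const_add w
    have hμw : HasFDerivAt μ (InnerProductSpace.toDual ℝ _ (μ' w)) w := hμ w
    have hμw2 : HasFDerivAt μ (InnerProductSpace.toDual ℝ _ (μ' w)) (w + (0:ℝ) • p) := by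
      simpa using hμw
    have hcomp : HasDerivAt (fun t : ℝ => μ (w + t • p)) ((inner ℝ (μ' w) p : ℝ)) 0 := by
      have := hμw2.comp_hasDerivAt (0:ℝ) hline; exact this
    have hμtend : Filter.Tendsto (fun t : ℝ => (μ (w + t • p) - μ w) / t)
        (nhdsWithin 0 (Set.Ioi 0)) (nhds ((inner ℝ (μ' w) p : ℝ))) := by
      have h := hasDerivAt_iff_tendsto_slope.mp hcomp
      have h' := h.mono_left (nhdsWithin_mono _ (by
        intro t ht
        exact fun h0 => (ne_of_gt (Set.mem_Ioi.mp ht)) (by simpa using h0)))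
      refine h'.congr fun t => ?_
      simp [slope_def_field]
    have hμtend' : Filter.Tendsto
        (fun t : ℝ => (μ (w + t • p) - μ w) / t + (η v - η w))
        (nhdsWithin 0 (Set.Ioi 0)) (nhds ((inner ℝ (μ' w) p : ℝ) + (η v - η w))) :=
      hμtend.add_const _
    have hev : ∀ᶠ t in nhdsWithin (0:ℝ) (Set.Ioi 0),
        ((μ (w + t • p) + η (w + t • p)) - (μ w + η w)) / t ≤
        (μ (w + t • p) - μ w) / t + (η v - η w) := by
      have hmem : Set.Ioc (0:ℝ) 1 ∈ nhdsWithin (0:ℝ) (Set.Ioi 0) := by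
        refine mem_nhdsWithin.mpr ⟨Set.Iio 1, isOpen_Iio, by norm_num, ?_⟩
        intro t ht
        exact ⟨ht.2, le_of_lt ht.1⟩
      filter_upwards [hmem] with t ht
      have ht0 : 0 < t := ht.1
      have ht1 : t ≤ 1 := ht.2
      have hηconv' : η (w + t • p) ≤ (1 - t) * η w + t * η v := by
        have := hηconv.2 (Set.mem_univ w) (Set.mem_univ v)
          (by linarith : (0:ℝ) ≤ 1 - t) (le_of_lt ht0) (by ring)
        have hcomb : (1 - t) • w + t • v = w + t • p := by
          simp [hp, smul_sub]
          module
        simpa [hcomb, smul_eq_mul] using this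
      have hηq : (η (w + t • p) - η w) / t ≤ η v - η w := by
        rw [div_le_iff₀ ht0]
        nlinarith
      have : ((μ (w + t • p) + η (w + t • p)) - (μ w + η w)) / t
          = (μ (w + t • p) - μ w) / t + (η (w + t • p) - η w) / t := by
        ring
      rw [this]
      linarith
    have hle : fd ≤ (inner ℝ (μ' w) p : ℝ) + (η v - η w) :=
      le_of_tendsto_of_tendsto hfd hμtend' hev
    have hinner : (inner ℝ (μ' w) p : ℝ) = -(inner ℝ (μ' w) (w - v) : ℝ) := by
      rw [hp, ← inner_neg_right]
      congr 1
      abel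
    rw [hφw]
    rw [hinner] at hle
    linarith
  · linarith
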